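/- arXiv:1112.0663 — 2 statements merged into one kernel-verified Lean document; each statement's English description precedes it below -/
import Mathlib

section
/- For every r > 1 there exist constants C > 0 and M > 1 such that for all t > 0 and all x ∈ ℝ: ∫_{-∞}^{∞} t^{-1/2} exp(-|x-y|²/t) (1+|y|)^{-r} dy ≤ C[ (1+|x|+√t)^{-r} + (1+√t)^{-1} exp(-|x|²/(M t)) ]. -/
open MeasureTheory Real

/-- The algebraically decaying profile is integrable. -/
lemma gca_decay_integrable {r : ℝ} (hr : 1 < r) :
    Integrable (fun y : ℝ => (1 + |y|) ^ (-r)) := by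
  have h : ((Module.finrank ℝ ℝ : ℕ) : ℝ) < r := by simpa using hr
  simpa [Real.norm_eq_abs] using integrable_one_add_norm (E := ℝ) (μ := volume) h

lemma gca_rpow_neg_half {t : ℝ} (ht : 0 ≤ t) :
    t ^ (-(1:ℝ)/2) = (Real.sqrt t)⁻¹ := by
  rw [Real.sqrt_eq_rpow, ← Real.rpow_neg ht]
  norm_num

/-- The generalized integrand (Gaussian with coefficient `c`) is integrable. -/
lemma gca_integrable {r : ℝ} (hr : 1 < r) (c t x : ℝ) (hc : 0 < c) (ht : 0 < t) :
    Integrable (fun y : ℝ =>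
      t ^ (-(1:ℝ)/2) * Real.exp (-(c * (x - y)^2) / t) * (1 + |y|) ^ (-r)) := by
  refine ((gca_decay_integrable hr).const_mul (t ^ (-(1:ℝ)/2))).mono' ?_ ?_
  · apply Continuous.aestronglyMeasurable
    have h1 : Continuous fun y : ℝ => Real.exp (-(c * (x - y)^2) / t) := by
      continuity
    have h2 : Continuous fun y : ℝ => (1 + |y|) ^ (-r) := by
      apply Continuous.rpow_const (by continuity)
      intro y; left; positivity
    exact (continuous_const.mul h1).mul h2
  · filter_upwards with y
    have he : Real.exp (-(c * (x - y)^2) / t) ≤ 1 := by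
      rw [Real.exp_le_one_iff]
      have : 0 ≤ c * (x - y)^2 := by positivity
      have : -(c * (x - y)^2) ≤ 0 := by linarith
      exact div_nonpos_of_nonpos_of_nonneg this ht.le
    have h0 : (0:ℝ) ≤ t ^ (-(1:ℝ)/2) * Real.exp (-(c * (x - y)^2) / t) * (1 + |y|) ^ (-r) := by
      positivity
    rw [Real.norm_eq_abs, abs_of_nonneg h0]
    have h1 : (0:ℝ) ≤ (1 + |y|) ^ (-r) := by positivity
    have h2 : (0:ℝ) ≤ t ^ (-(1:ℝ)/2) := by positivity
    calc t ^ (-(1:ℝ)/2) * Real.exp (-(c * (x - y)^2) / t) * (1 + |y|) ^ (-r)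
        ≤ t ^ (-(1:ℝ)/2) * 1 * (1 + |y|) ^ (-r) := by
          apply mul_le_mul_of_nonneg_right _ h1
          exact mul_le_mul_of_nonneg_left he h2
      _ = t ^ (-(1:ℝ)/2) * (1 + |y|) ^ (-r) := by ring

/-- Gaussian translation integral. -/
lemma gca_gauss_integral (c t x : ℝ) (hc : 0 < c) (ht : 0 < t) :
    (∫ y : ℝ, Real.exp (-(c * (x - y)^2) / t)) = Real.sqrt (π * t / c) := by
  have h : ∀ y : ℝ, Real.exp (-(c * (x - y)^2) / t)
      = (fun u : ℝ => Real.exp (-(c/t) * u ^ 2)) (x - y) := by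
    intro y; congr 1; field_simp
  rw [integral_congr_ae (Filter.Eventually.of_forall h)]
  rw [integral_sub_left_eq_self (fun u : ℝ => Real.exp (-(c/t) * u ^ 2)) volume x]
  rw [integral_gaussian]
  congr 1
  field_simp

/-- Bound by dropping the Gaussian factor. -/
lemma gca_bd_decay {r : ℝ} (hr : 1 < r) (c t x : ℝ) (hc : 0 < c) (ht : 0 < t) :
    (∫ y : ℝ, t ^ (-(1:ℝ)/2) * Real.exp (-(c * (x - y)^2) / t) * (1 + |y|) ^ (-r))
      ≤ t ^ (-(1:ℝ)/2) * ∫ y : ℝ, (1 + |y|) ^ (-r) := by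
  rw [← MeasureTheory.integral_const_mul]
  apply integral_mono (gca_integrable hr c t x hc ht)
    ((gca_decay_integrable hr).const_mul _)
  intro y
  have he : Real.exp (-(c * (x - y)^2) / t) ≤ 1 := by
    rw [Real.exp_le_one_iff]
    have h1 : 0 ≤ c * (x - y)^2 := by positivity
    have : -(c * (x - y)^2) ≤ 0 := by linarith
    exact div_nonpos_of_nonpos_of_nonneg this ht.le
  have h1 : (0:ℝ) ≤ (1 + |y|) ^ (-r) := by positivity
  have h2 : (0:ℝ) ≤ t ^ (-(1:ℝ)/2) := by positivity
  calc t ^ (-(1:ℝ)/2) * Real.exp (-(c * (x - y)^2) / t) * (1 + |y|) ^ (-r)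
      ≤ t ^ (-(1:ℝ)/2) * 1 * (1 + |y|) ^ (-r) := by
        apply mul_le_mul_of_nonneg_right _ h1
        exact mul_le_mul_of_nonneg_left he h2
    _ = t ^ (-(1:ℝ)/2) * (1 + |y|) ^ (-r) := by ring

/-- Full-line weighted Gaussian integral. -/
lemma gca_gauss_full (c t x : ℝ) (hc : 0 < c) (ht : 0 < t) :
    (∫ y : ℝ, t ^ (-(1:ℝ)/2) * Real.exp (-(c * (x - y)^2) / t)) = Real.sqrt (π / c) := by
  rw [MeasureTheory.integral_const_mul, gca_gauss_integral c t x hc ht]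
  rw [gca_rpow_neg_half ht.le]
  rw [show π * t / c = (π / c) * t by ring, Real.sqrt_mul (by positivity) t]
  rw [mul_comm]
  rw [mul_assoc, mul_inv_cancel₀ (by positivity : Real.sqrt t ≠ 0), mul_one]

/-- The pure Gaussian part is integrable. -/
lemma gca_gauss_integrable (c t x : ℝ) (hc : 0 < c) (ht : 0 < t) :
    Integrable (fun y : ℝ => t ^ (-(1:ℝ)/2) * Real.exp (-(c * (x - y)^2) / t)) := by
  have hbase : Integrable (fun u : ℝ => Real.exp (-(c/t) * u ^ 2)) :=
    integrable_exp_neg_mul_sq (by positivity)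
  have h2 : Integrable (fun y : ℝ => Real.exp (-(c/t) * (x - y)^2)) := by
    simpa using hbase.comp_sub_left x
  have heq : (fun y : ℝ => t ^ (-(1:ℝ)/2) * Real.exp (-(c * (x - y)^2) / t))
      = fun y : ℝ => t ^ (-(1:ℝ)/2) * Real.exp (-(c/t) * (x - y)^2) := by
    funext y; congr 1; congr 1; field_simp
  rw [heq]
  exact h2.const_mul _

/-- Bound by dropping the decay factor. -/

lemma gca_bd_gauss {r : ℝ} (hr : 1 < r) (c t x : ℝ) (hc : 0 < c) (ht : 0 < t) :
    (∫ y : ℝ, t ^ (-(1:ℝ)/2) * Real.exp (-(c * (x - y)^2) / t) * (1 + |y|) ^ (-r))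
      ≤ Real.sqrt (π / c) := by
  rw [← gca_gauss_full c t x hc ht]
  apply integral_mono (gca_integrable hr c t x hc ht) (gca_gauss_integrable c t x hc ht)
  intro y
  have h1 : (1 + |y|) ^ (-r) ≤ 1 := by
    have := Real.rpow_le_rpow_of_exponent_le (x := 1 + |y|) (by simp [abs_nonneg]) (by linarith : -r ≤ 0)
    simpa using this
  have h2 : (0:ℝ) ≤ t ^ (-(1:ℝ)/2) * Real.exp (-(c * (x - y)^2) / t) := by positivity
  calc t ^ (-(1:ℝ)/2) * Real.exp (-(c * (x - y)^2) / t) * (1 + |y|) ^ (-r)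
      ≤ t ^ (-(1:ℝ)/2) * Real.exp (-(c * (x - y)^2) / t) * 1 :=
        mul_le_mul_of_nonneg_left h1 h2
    _ = _ := by ring

set_option maxHeartbeats 1000000 in
/-- Convolution of a heat-kernel Gaussian with an algebraically decaying profile,
combined algebraic-plus-Gaussian form. -/
theorem gaussian_conv_algebraic (r : ℝ) (hr : 1 < r) :
    ∃ C > (0:ℝ), ∃ M > (1:ℝ), ∀ t > (0:ℝ), ∀ x : ℝ,
      (∫ y : ℝ, t ^ (-(1:ℝ)/2) * Real.exp (-(x - y)^2 / t) * (1 + |y|) ^ (-r)) ≤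
        C * ((1 + |x| + Real.sqrt t) ^ (-r) +
          (1 + Real.sqrt t)⁻¹ * Real.exp (-x^2 / (M * t))) := by
  have hK0 : (0:ℝ) ≤ ∫ y : ℝ, (1 + |y|) ^ (-r) :=
    integral_nonneg fun y => by positivity
  set K := ∫ y : ℝ, (1 + |y|) ^ (-r) with hKdef
  have hs2 : (0:ℝ) ≤ Real.sqrt (2*π) := Real.sqrt_nonneg _
  have hsp : (0:ℝ) ≤ Real.sqrt π := Real.sqrt_nonneg _
  have h4r : (0:ℝ) < (4:ℝ)^r := Real.rpow_pos_of_pos (by norm_num) r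
  have h2r : (0:ℝ) < (2:ℝ)^r := Real.rpow_pos_of_pos (by norm_num) r
  have hep : (0:ℝ) < Real.exp 1 := Real.exp_pos 1
  refine ⟨(4:ℝ)^r * Real.sqrt π + 2*Real.sqrt (2*π) + 2*K + 2*K*Real.exp 1 + 1,
    ?_, 8, by norm_num, ?_⟩
  · nlinarith [mul_nonneg hK0 hep.le, mul_nonneg h4r.le hsp]
  intro t ht x
  have hst : 0 < Real.sqrt t := Real.sqrt_pos.mpr ht
  have hpos : (0:ℝ) < 1 + Real.sqrt t := by positivity
  have hT1 : (0:ℝ) ≤ (1 + |x| + Real.sqrt t) ^ (-r) := by positivity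
  have hT2 : (0:ℝ) ≤ (1 + Real.sqrt t)⁻¹ * Real.exp (-x^2 / (8 * t)) := by positivity
  have hconv : (∫ y : ℝ, t ^ (-(1:ℝ)/2) * Real.exp (-(x - y)^2 / t) * (1 + |y|) ^ (-r))
      = ∫ y : ℝ, t ^ (-(1:ℝ)/2) * Real.exp (-((1:ℝ) * (x - y)^2) / t) * (1 + |y|) ^ (-r) := by
    simp only [one_mul]
  rw [hconv]
  have key : (∫ y : ℝ, t ^ (-(1:ℝ)/2) * Real.exp (-((1:ℝ) * (x - y)^2) / t) * (1 + |y|) ^ (-r))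
      ≤ ((4:ℝ)^r * Real.sqrt π) * (1 + |x| + Real.sqrt t) ^ (-r)
        + (2*Real.sqrt (2*π) + 2*K + 2*K*Real.exp 1)
          * ((1 + Real.sqrt t)⁻¹ * Real.exp (-x^2 / (8 * t))) := by
    rcases le_or_gt (Real.sqrt t) (1 + |x|) with hcase | hcase
    · -- algebraic regime: √t ≤ 1 + |x|
      set S : Set ℝ := {y : ℝ | |y| ≤ |x|/2} with hSdef
      have hS : MeasurableSet S := measurableSet_le measurable_abs measurable_const
      have hfi := gca_integrable hr 1 t x one_pos ht
      have hsplit := MeasureTheory.integral_add_compl hS hfi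
      have hgi := gca_integrable hr (1/2) t x (by norm_num) ht
      -- inner region bound
      have hBpt : ∀ y ∈ S, t ^ (-(1:ℝ)/2) * Real.exp (-((1:ℝ) * (x - y)^2) / t) * (1 + |y|) ^ (-r)
          ≤ Real.exp (-x^2/(8*t)) *
            (t ^ (-(1:ℝ)/2) * Real.exp (-((1/2:ℝ) * (x - y)^2) / t) * (1 + |y|) ^ (-r)) := by
        intro y hy
        have hy' : |y| ≤ |x|/2 := hy
        have habs : |x|/2 ≤ |x - y| := by
          have := abs_sub_abs_le_abs_sub x y
          linarith
        have hsq : x^2 ≤ 4*(x - y)^2 := by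
          nlinarith [mul_self_le_mul_self (by positivity : (0:ℝ) ≤ |x|/2) habs,
            sq_abs (x - y), sq_abs x]
        have hexp : Real.exp (-((1:ℝ) * (x - y)^2) / t)
            ≤ Real.exp (-x^2/(8*t)) * Real.exp (-((1/2:ℝ) * (x - y)^2) / t) := by
          rw [← Real.exp_add, Real.exp_le_exp,
            show -x^2/(8*t) + -((1/2:ℝ) * (x - y)^2) / t = (-x^2 - 4*(x-y)^2)/(8*t) by
              field_simp; ring,
            show -((1:ℝ) * (x - y)^2) / t = (-8*(x-y)^2)/(8*t) by field_simp,
            div_le_div_iff₀ (by positivity) (by positivity)]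
          nlinarith [mul_le_mul_of_nonneg_left hsq ht.le]
        have h1 : (0:ℝ) ≤ t ^ (-(1:ℝ)/2) := by positivity
        have h2 : (0:ℝ) ≤ (1 + |y|) ^ (-r) := by positivity
        calc t ^ (-(1:ℝ)/2) * Real.exp (-((1:ℝ) * (x - y)^2) / t) * (1 + |y|) ^ (-r)
            ≤ t ^ (-(1:ℝ)/2) * (Real.exp (-x^2/(8*t)) * Real.exp (-((1/2:ℝ) * (x - y)^2) / t))
              * (1 + |y|) ^ (-r) := by
              apply mul_le_mul_of_nonneg_right _ h2
              exact mul_le_mul_of_nonneg_left hexp h1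
          _ = _ := by ring
      have hB : (∫ y in S, t ^ (-(1:ℝ)/2) * Real.exp (-((1:ℝ) * (x - y)^2) / t) * (1 + |y|) ^ (-r))
          ≤ Real.exp (-x^2/(8*t)) *
            ∫ y : ℝ, t ^ (-(1:ℝ)/2) * Real.exp (-((1/2:ℝ) * (x - y)^2) / t) * (1 + |y|) ^ (-r) := by
        calc (∫ y in S, t ^ (-(1:ℝ)/2) * Real.exp (-((1:ℝ) * (x - y)^2) / t) * (1 + |y|) ^ (-r))
            ≤ ∫ y in S, Real.exp (-x^2/(8*t)) *
                (t ^ (-(1:ℝ)/2) * Real.exp (-((1/2:ℝ) * (x - y)^2) / t) * (1 + |y|) ^ (-r)) :=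
              setIntegral_mono_on hfi.integrableOn ((hgi.const_mul _).integrableOn) hS hBpt
          _ ≤ ∫ y : ℝ, Real.exp (-x^2/(8*t)) *
                (t ^ (-(1:ℝ)/2) * Real.exp (-((1/2:ℝ) * (x - y)^2) / t) * (1 + |y|) ^ (-r)) :=
              setIntegral_le_integral (hgi.const_mul _)
                (Filter.Eventually.of_forall fun y => by positivity)
          _ = _ := MeasureTheory.integral_const_mul _ _
      -- bound for the half-Gaussian integral
      have hmin : (∫ y : ℝ, t ^ (-(1:ℝ)/2) * Real.exp (-((1/2:ℝ) * (x - y)^2) / t) * (1 + |y|) ^ (-r))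
          ≤ (2*Real.sqrt (2*π) + 2*K) * (1 + Real.sqrt t)⁻¹ := by
        have hinv : (0:ℝ) ≤ (1 + Real.sqrt t)⁻¹ := by positivity
        rcases le_or_gt t 1 with hts | hts
        · have h1 : Real.sqrt t ≤ 1 := by
            rw [show (1:ℝ) = Real.sqrt 1 by simp]
            exact Real.sqrt_le_sqrt hts
          have h2 : (2:ℝ)⁻¹ ≤ (1 + Real.sqrt t)⁻¹ := by
            rw [inv_eq_one_div, inv_eq_one_div, div_le_div_iff₀ (by norm_num) hpos]
            linarith
          have h3 : (1:ℝ) ≤ 2 * (1 + Real.sqrt t)⁻¹ := by linarith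
          have h4 := gca_bd_gauss hr (1/2) t x (by norm_num) ht
          rw [show π / (1/2:ℝ) = 2*π by ring] at h4
          nlinarith [mul_le_mul_of_nonneg_left h3 hs2, mul_nonneg hK0 hinv]
        · have h1 : 1 ≤ Real.sqrt t := by
            rw [show (1:ℝ) = Real.sqrt 1 by simp]
            exact Real.sqrt_le_sqrt hts.le
          have h2 : (Real.sqrt t)⁻¹ ≤ 2 * (1 + Real.sqrt t)⁻¹ := by
            rw [inv_eq_one_div, inv_eq_one_div, mul_one_div, div_le_div_iff₀ hst hpos]
            linarith
          have h4 : (∫ y : ℝ, t ^ (-(1:ℝ)/2) * Real.exp (-((1/2:ℝ) * (x - y)^2) / t) * (1 + |y|) ^ (-r))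
              ≤ (Real.sqrt t)⁻¹ * K := by
            rw [← gca_rpow_neg_half ht.le]
            exact gca_bd_decay hr (1/2) t x (by norm_num) ht
          nlinarith [mul_le_mul_of_nonneg_right h2 hK0, mul_nonneg hs2 hinv]
      have hBfinal : (∫ y in S, t ^ (-(1:ℝ)/2) * Real.exp (-((1:ℝ) * (x - y)^2) / t) * (1 + |y|) ^ (-r))
          ≤ (2*Real.sqrt (2*π) + 2*K) * ((1 + Real.sqrt t)⁻¹ * Real.exp (-x^2 / (8 * t))) := by
        have := mul_le_mul_of_nonneg_left hmin (Real.exp_nonneg (-x^2/(8*t)))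
        calc (∫ y in S, t ^ (-(1:ℝ)/2) * Real.exp (-((1:ℝ) * (x - y)^2) / t) * (1 + |y|) ^ (-r))
            ≤ Real.exp (-x^2/(8*t)) *
              ∫ y : ℝ, t ^ (-(1:ℝ)/2) * Real.exp (-((1/2:ℝ) * (x - y)^2) / t) * (1 + |y|) ^ (-r) := hB
          _ ≤ Real.exp (-x^2/(8*t)) * ((2*Real.sqrt (2*π) + 2*K) * (1 + Real.sqrt t)⁻¹) := this
          _ = _ := by ring
      -- outer region bound
      have hApt : ∀ y ∈ Sᶜ, t ^ (-(1:ℝ)/2) * Real.exp (-((1:ℝ) * (x - y)^2) / t) * (1 + |y|) ^ (-r)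
          ≤ ((2:ℝ)^r * (1+|x|)^(-r)) * (t ^ (-(1:ℝ)/2) * Real.exp (-((1:ℝ) * (x - y)^2) / t)) := by
        intro y hy
        have hy' : |x|/2 < |y| := not_le.mp hy
        have hbase : (1+|x|)/2 ≤ 1 + |y| := by linarith
        have h1 : (1 + |y|) ^ (-r) ≤ ((1+|x|)/2) ^ (-r) :=
          Real.rpow_le_rpow_of_nonpos (by positivity) hbase (by linarith)
        have h2 : ((1+|x|)/2) ^ (-r) = (2:ℝ)^r * (1+|x|)^(-r) := by
          rw [Real.div_rpow (by positivity) (by norm_num),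
            Real.rpow_neg (by norm_num : (0:ℝ) ≤ 2), div_eq_mul_inv, inv_inv, mul_comm]
        have h3 : (0:ℝ) ≤ t ^ (-(1:ℝ)/2) * Real.exp (-((1:ℝ) * (x - y)^2) / t) := by positivity
        have h4 := mul_le_mul_of_nonneg_left (h1.trans_eq h2) h3
        calc t ^ (-(1:ℝ)/2) * Real.exp (-((1:ℝ) * (x - y)^2) / t) * (1 + |y|) ^ (-r)
            = (t ^ (-(1:ℝ)/2) * Real.exp (-((1:ℝ) * (x - y)^2) / t)) * (1 + |y|) ^ (-r) := by ring
          _ ≤ (t ^ (-(1:ℝ)/2) * Real.exp (-((1:ℝ) * (x - y)^2) / t)) * ((2:ℝ)^r * (1+|x|)^(-r)) := h4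
          _ = _ := by ring
      have hA : (∫ y in Sᶜ, t ^ (-(1:ℝ)/2) * Real.exp (-((1:ℝ) * (x - y)^2) / t) * (1 + |y|) ^ (-r))
          ≤ (2:ℝ)^r * (1+|x|)^(-r) * Real.sqrt π := by
        calc (∫ y in Sᶜ, t ^ (-(1:ℝ)/2) * Real.exp (-((1:ℝ) * (x - y)^2) / t) * (1 + |y|) ^ (-r))
            ≤ ∫ y in Sᶜ, ((2:ℝ)^r * (1+|x|)^(-r)) *
                (t ^ (-(1:ℝ)/2) * Real.exp (-((1:ℝ) * (x - y)^2) / t)) :=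
              setIntegral_mono_on hfi.integrableOn
                (((gca_gauss_integrable 1 t x one_pos ht).const_mul _).integrableOn) hS.compl hApt
          _ ≤ ∫ y : ℝ, ((2:ℝ)^r * (1+|x|)^(-r)) *
                (t ^ (-(1:ℝ)/2) * Real.exp (-((1:ℝ) * (x - y)^2) / t)) :=
              setIntegral_le_integral ((gca_gauss_integrable 1 t x one_pos ht).const_mul _)
                (Filter.Eventually.of_forall fun y => by positivity)
          _ = ((2:ℝ)^r * (1+|x|)^(-r)) * Real.sqrt (π/1) := by
              rw [MeasureTheory.integral_const_mul, gca_gauss_full 1 t x one_pos ht]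
          _ = _ := by norm_num
      have hT1b : (1+|x|)^(-r) ≤ (2:ℝ)^r * (1 + |x| + Real.sqrt t) ^ (-r) := by
        have hle : 1 + |x| + Real.sqrt t ≤ 2*(1+|x|) := by linarith
        have h1 : (2*(1+|x|))^(-r) ≤ (1 + |x| + Real.sqrt t) ^ (-r) :=
          Real.rpow_le_rpow_of_nonpos (by positivity) hle (by linarith)
        have h2 : (2*(1+|x|):ℝ)^(-r) = (2:ℝ)^(-r) * (1+|x|)^(-r) :=
          Real.mul_rpow (by norm_num) (by positivity)
        have h3 : (2:ℝ)^r * (2:ℝ)^(-r) = 1 := by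
          rw [← Real.rpow_add (by norm_num)]; simp
        have h1' : (2:ℝ)^(-r) * (1+|x|)^(-r) ≤ (1 + |x| + Real.sqrt t) ^ (-r) := h2 ▸ h1
        have h4 := mul_le_mul_of_nonneg_left h1' h2r.le
        calc (1+|x|)^(-r) = ((2:ℝ)^r * (2:ℝ)^(-r)) * (1+|x|)^(-r) := by rw [h3, one_mul]
          _ = (2:ℝ)^r * ((2:ℝ)^(-r) * (1+|x|)^(-r)) := by ring
          _ ≤ (2:ℝ)^r * (1 + |x| + Real.sqrt t) ^ (-r) := h4
      have h44 : (2:ℝ)^r * (2:ℝ)^r = (4:ℝ)^r := by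
        rw [← Real.mul_rpow (by norm_num) (by norm_num)]; norm_num
      have hAfinal : (∫ y in Sᶜ, t ^ (-(1:ℝ)/2) * Real.exp (-((1:ℝ) * (x - y)^2) / t) * (1 + |y|) ^ (-r))
          ≤ (4:ℝ)^r * Real.sqrt π * (1 + |x| + Real.sqrt t) ^ (-r) := by
        calc (∫ y in Sᶜ, t ^ (-(1:ℝ)/2) * Real.exp (-((1:ℝ) * (x - y)^2) / t) * (1 + |y|) ^ (-r))
            ≤ (2:ℝ)^r * (1+|x|)^(-r) * Real.sqrt π := hA
          _ ≤ (2:ℝ)^r * ((2:ℝ)^r * (1 + |x| + Real.sqrt t) ^ (-r)) * Real.sqrt π :=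
              mul_le_mul_of_nonneg_right (mul_le_mul_of_nonneg_left hT1b h2r.le) hsp
          _ = ((2:ℝ)^r * (2:ℝ)^r) * Real.sqrt π * (1 + |x| + Real.sqrt t) ^ (-r) := by ring
          _ = _ := by rw [h44]
      have hslack : (0:ℝ) ≤ 2*K*Real.exp 1 * ((1 + Real.sqrt t)⁻¹ * Real.exp (-x^2 / (8 * t))) :=
        mul_nonneg (mul_nonneg (by linarith) hep.le) hT2
      linarith [hsplit, hBfinal, hAfinal, hslack]
    · -- Gaussian regime: 1 + |x| < √t
      have hI : (∫ y : ℝ, t ^ (-(1:ℝ)/2) * Real.exp (-((1:ℝ) * (x - y)^2) / t) * (1 + |y|) ^ (-r))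
          ≤ (Real.sqrt t)⁻¹ * K := by
        rw [← gca_rpow_neg_half ht.le]
        exact gca_bd_decay hr 1 t x one_pos ht
      have h2 : (Real.sqrt t)⁻¹ ≤ 2 * (1 + Real.sqrt t)⁻¹ := by
        rw [inv_eq_one_div, inv_eq_one_div, mul_one_div, div_le_div_iff₀ hst hpos]
        linarith [abs_nonneg x]
      have hx2 : x^2 ≤ 8*t := by
        have h3 : (1+|x|)^2 ≤ (Real.sqrt t)^2 := by
          apply pow_le_pow_left₀ (by positivity) hcase.le
        nlinarith [sq_abs x, abs_nonneg x, Real.sq_sqrt ht.le, ht]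
      have hexp1 : (1:ℝ) ≤ Real.exp 1 * Real.exp (-x^2/(8*t)) := by
        rw [← Real.exp_add]
        apply Real.one_le_exp
        have h5 : x^2/(8*t) ≤ 1 := by
          rw [div_le_one (by positivity)]; linarith
        have h6 : -x^2/(8*t) = -(x^2/(8*t)) := by ring
        rw [h6]; linarith
      have hinv : (0:ℝ) ≤ (1 + Real.sqrt t)⁻¹ := by positivity
      have c1 : (∫ y : ℝ, t ^ (-(1:ℝ)/2) * Real.exp (-((1:ℝ) * (x - y)^2) / t) * (1 + |y|) ^ (-r))
          ≤ 2*K*Real.exp 1 * ((1 + Real.sqrt t)⁻¹ * Real.exp (-x^2 / (8 * t))) := by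
        have s1 : (Real.sqrt t)⁻¹ * K ≤ (2 * (1 + Real.sqrt t)⁻¹) * K :=
          mul_le_mul_of_nonneg_right h2 hK0
        have s2 : (2 * (1 + Real.sqrt t)⁻¹) * K * 1
            ≤ (2 * (1 + Real.sqrt t)⁻¹) * K * (Real.exp 1 * Real.exp (-x^2/(8*t))) := by
          apply mul_le_mul_of_nonneg_left hexp1
          positivity
        calc (∫ y : ℝ, t ^ (-(1:ℝ)/2) * Real.exp (-((1:ℝ) * (x - y)^2) / t) * (1 + |y|) ^ (-r))
            ≤ (Real.sqrt t)⁻¹ * K := hI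
          _ ≤ (2 * (1 + Real.sqrt t)⁻¹) * K := s1
          _ = (2 * (1 + Real.sqrt t)⁻¹) * K * 1 := by ring
          _ ≤ (2 * (1 + Real.sqrt t)⁻¹) * K * (Real.exp 1 * Real.exp (-x^2/(8*t))) := s2
          _ = _ := by ring
      have hslack1 : (0:ℝ) ≤ (4:ℝ)^r * Real.sqrt π * (1 + |x| + Real.sqrt t) ^ (-r) :=
        mul_nonneg (mul_nonneg h4r.le hsp) hT1
      have hslack2 : (0:ℝ) ≤ (2*Real.sqrt (2*π) + 2*K)
          * ((1 + Real.sqrt t)⁻¹ * Real.exp (-x^2 / (8 * t))) :=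
        mul_nonneg (by linarith) hT2
      linarith [c1, hslack1, hslack2]
  have hC1 : (0:ℝ) ≤ (2*Real.sqrt (2*π) + 2*K + 2*K*Real.exp 1 + 1) * ((1 + |x| + Real.sqrt t) ^ (-r)) :=
    mul_nonneg (by nlinarith [mul_nonneg hK0 hep.le]) hT1
  have hC2 : (0:ℝ) ≤ ((4:ℝ)^r * Real.sqrt π + 1) * ((1 + Real.sqrt t)⁻¹ * Real.exp (-x^2/(8*t))) :=
    mul_nonneg (by positivity) hT2
  linarith [key, hC1, hC2]
end

section
/- For every r > 1 and M > 0 there exist C > 0 and M' > M such that for all 0 < s < t, all x ∈ ℝ, and all 0 < w < 1: ∫_{-∞}^{∞} (1+t-s)^{-1/2} exp(-|x-wy|²/(M(1+t-s))) (1+|y|+√s)^{-r} dy ≤ C[ (1+|x|+√(t-s)+√s)^{-r} + (1+t-s)^{-1/2} (1+s)^{-(r-1)/2} exp(-|x|²/(M'(1+t))) ]. -/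
open MeasureTheory Real Set Filter Topology

lemma aux_Ioi (c r : ℝ) (hc : 0 < c) (hr : 1 < r) :
    IntegrableOn (fun u : ℝ => (c + u) ^ (-r)) (Set.Ioi (0:ℝ)) ∧
      ∫ u in Set.Ioi (0:ℝ), (c + u) ^ (-r) = c ^ (1-r) / (r-1) := by
  have hne : r - 1 ≠ 0 := by linarith
  set g : ℝ → ℝ := fun u => -((c + u) ^ (1-r)) / (r-1) with hg
  have hderiv : ∀ u ∈ Set.Ici (0:ℝ), HasDerivAt g ((c + u) ^ (-r)) u := by
    intro u hu
    have hu0 : (0:ℝ) ≤ u := hu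
    have hcu : (0:ℝ) < c + u := by linarith
    have h1 : HasDerivAt (fun v : ℝ => c + v) 1 u := (hasDerivAt_id u).const_add c
    have h2 := h1.rpow_const (p := 1 - r) (Or.inl hcu.ne')
    have h3 := (h2.neg).div_const (r-1)
    refine h3.congr_deriv ?_
    rw [show (1:ℝ) - r - 1 = -r by ring]
    field_simp
    ring
  have hpos : ∀ u ∈ Set.Ioi (0:ℝ), 0 ≤ (c + u) ^ (-r) := fun u hu =>
    Real.rpow_nonneg (by have : (0:ℝ) < u := hu; linarith) _
  have htend : Tendsto g atTop (𝓝 0) := by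
    have h1 : Tendsto (fun u : ℝ => (c + u) ^ (1-r)) atTop (𝓝 0) := by
      have h2 := (tendsto_rpow_neg_atTop (by linarith : (0:ℝ) < r - 1)).comp
        (tendsto_atTop_add_const_left atTop c tendsto_id)
      simpa [Function.comp_def, show -(r-1) = 1-r by ring] using h2
    have h3 := (h1.neg).div_const (r-1)
    simpa using h3
  refine ⟨integrableOn_Ioi_deriv_of_nonneg' hderiv hpos htend, ?_⟩
  rw [integral_Ioi_of_hasDerivAt_of_nonneg' hderiv hpos htend]
  simp [hg, neg_div]

lemma alg_integrable (a r : ℝ) (ha : 0 ≤ a) (hr : 1 < r) :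
    Integrable (fun y : ℝ => (1 + |y| + a) ^ (-r)) := by
  have h0 : Integrable (fun y : ℝ => (1 + ‖y‖) ^ (-r)) :=
    integrable_one_add_norm (E := ℝ) (by simpa using hr)
  refine h0.mono ?_ (Filter.Eventually.of_forall fun y => ?_)
  · exact (((continuous_const.add continuous_abs).add continuous_const).rpow_const
      (fun y => Or.inl (by positivity : (0:ℝ) < 1 + |y| + a).ne')).aestronglyMeasurable
  · rw [Real.norm_eq_abs, Real.norm_eq_abs, abs_of_nonneg (Real.rpow_nonneg (by positivity) _),
      abs_of_nonneg (Real.rpow_nonneg (by positivity) _)]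
    apply Real.rpow_le_rpow_of_nonpos (by positivity) _ (by linarith)
    rw [Real.norm_eq_abs]; linarith [abs_nonneg y]

lemma alg_integral (a r : ℝ) (ha : 0 ≤ a) (hr : 1 < r) :
    ∫ y : ℝ, (1 + |y| + a) ^ (-r) = 2 * ((1+a) ^ (1-r) / (r-1)) := by
  have h := aux_Ioi (1+a) r (by linarith) hr
  have e : (fun y : ℝ => (1 + |y| + a) ^ (-r)) = fun y => ((1+a) + |y|) ^ (-r) := by
    funext y; congr 1; ring
  rw [e, integral_comp_abs (f := fun u => ((1+a) + u) ^ (-r)), h.2]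

lemma gauss_int (b w x : ℝ) (hb : 0 < b) (hw : 0 < w) :
    Integrable (fun y : ℝ => Real.exp (-(x - w*y)^2 / b)) ∧
      ∫ y : ℝ, Real.exp (-(x - w*y)^2 / b) = Real.sqrt (Real.pi * b) / w := by
  have hb' : (0:ℝ) < 1/b := by positivity
  have h0 : Integrable (fun u : ℝ => Real.exp (-(1/b) * u^2)) := integrable_exp_neg_mul_sq hb'
  have h1 : Integrable (fun u : ℝ => Real.exp (-(1/b) * (u - x)^2)) := h0.comp_sub_right x
  have e : (fun y : ℝ => Real.exp (-(x - w*y)^2 / b)) =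
      fun y => Real.exp (-(1/b) * ((w*y) - x)^2) := by
    funext y; congr 1; ring
  constructor
  · rw [e]
    exact (integrable_comp_mul_left_iff (fun u => Real.exp (-(1/b) * (u - x)^2)) hw.ne').2 h1
  · rw [e, MeasureTheory.Measure.integral_comp_mul_left
      (fun u => Real.exp (-(1/b) * (u - x)^2)) w,
      integral_sub_right_eq_self (fun u => Real.exp (-(1/b) * u^2)) x,
      integral_gaussian, smul_eq_mul, abs_of_pos (inv_pos.2 hw)]
    rw [show Real.pi / (1/b) = Real.pi * b by field_simp, inv_mul_eq_div]
set_option maxHeartbeats 4000000 in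
/-- Two-time-scale scaled Gaussian convolution bound against combined
spatial-temporal algebraic decay. -/
theorem scaled_gaussian_conv_two_times (r M : ℝ) (hr : 1 < r) (hM : 0 < M) :
    ∃ C > (0:ℝ), ∃ M' > M, ∀ s t : ℝ, 0 < s → s < t → ∀ x w : ℝ, 0 < w → w < 1 →
      (∫ y : ℝ, (1 + t - s) ^ (-(1:ℝ)/2) * Real.exp (-(x - w*y)^2 / (M*(1+t-s))) *
          (1 + |y| + Real.sqrt s) ^ (-r)) ≤
        C * ((1 + |x| + Real.sqrt (t - s) + Real.sqrt s) ^ (-r) +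
          (1 + t - s) ^ (-(1:ℝ)/2) * (1 + s) ^ (-(r-1)/2) *
            Real.exp (-x^2 / (M'*(1+t)))) := by
  have hr1 : (0:ℝ) < r - 1 := by linarith
  have hc1pos : (0:ℝ) < 2/(r-1) := by positivity
  have hc2pos : (0:ℝ) < 2/(r-1) * Real.exp (1/(4*M)) := by positivity
  have hc3pos : (0:ℝ) < 8 ^ r * Real.sqrt (Real.pi * M) := by positivity
  refine ⟨2/(r-1) * Real.exp (1/(4*M)) + (2/(r-1) + 8 ^ r * Real.sqrt (Real.pi * M)),
    by linarith, 4*M, by linarith, ?_⟩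
  intro s t hs hst x w hw0 hw1
  have h1t : (0:ℝ) < 1 + t := by linarith
  set a := Real.sqrt s with haDef
  set τ := 1 + t - s with hτdef
  have hτ0 : (0:ℝ) < τ := by rw [hτdef]; linarith
  have hτ1 : (1:ℝ) < τ := by rw [hτdef]; linarith
  have ha : 0 ≤ a := Real.sqrt_nonneg s
  have hMτ : 0 < M * τ := by positivity
  have hτpow : (0:ℝ) ≤ τ ^ (-(1:ℝ)/2) := Real.rpow_nonneg hτ0.le _
  set T1 : ℝ := (1 + |x| + Real.sqrt (t - s) + a) ^ (-r) with hT1def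
  set T2 : ℝ := τ ^ (-(1:ℝ)/2) * (1 + s) ^ (-(r-1)/2) * Real.exp (-x^2 / (4*M*(1+t)))
    with hT2def
  set C : ℝ := 2/(r-1) * Real.exp (1/(4*M)) + (2/(r-1) + 8 ^ r * Real.sqrt (Real.pi * M))
    with hCdef
  clear_value a τ T1 T2 C
  have hT1n : 0 ≤ T1 := by
    rw [hT1def]; exact Real.rpow_nonneg (by positivity) _
  have hT2n : 0 ≤ T2 := by
    rw [hT2def]
    exact mul_nonneg (mul_nonneg hτpow (Real.rpow_nonneg (by linarith) _)) (Real.exp_nonneg _)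
  -- algebraic tail integral facts
  have hA := alg_integrable a r ha hr
  have hfactor : (1+a) ^ (1-r) ≤ (1+s) ^ (-(r-1)/2) := by
    have hsq : 1 + s ≤ (1+a) ^ (2:ℕ) := by
      have h1 : a ^ 2 = s := by rw [haDef]; exact Real.sq_sqrt hs.le
      nlinarith
    have h2 : ((1+a) ^ (2:ℕ) : ℝ) ^ ((1-r)/2) ≤ (1+s) ^ ((1-r)/2) :=
      Real.rpow_le_rpow_of_nonpos (by linarith) hsq (by linarith)
    have h3 : (1+a) ^ (1-r) = ((1+a) ^ (2:ℕ) : ℝ) ^ ((1-r)/2) := by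
      rw [← Real.rpow_natCast (1+a) 2, ← Real.rpow_mul (by positivity)]
      congr 1; push_cast; ring
    rw [h3]
    refine h2.trans_eq ?_
    congr 1; ring
  have hAbound : ∫ y : ℝ, (1 + |y| + a) ^ (-r) ≤ 2/(r-1) * (1+s) ^ (-(r-1)/2) := by
    rw [alg_integral a r ha hr]
    calc 2 * ((1+a) ^ (1-r) / (r-1)) = 2/(r-1) * (1+a) ^ (1-r) := by ring
      _ ≤ 2/(r-1) * (1+s) ^ (-(r-1)/2) := mul_le_mul_of_nonneg_left hfactor (by positivity)
  have hfnn : ∀ y : ℝ, 0 ≤ τ ^ (-(1:ℝ)/2) * Real.exp (-(x - w*y)^2 / (M*τ)) *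
      (1 + |y| + a) ^ (-r) := fun y =>
    mul_nonneg (mul_nonneg hτpow (Real.exp_nonneg _)) (Real.rpow_nonneg (by positivity) _)
  rcases le_or_gt (x^2) (1+t) with hx2 | hx2
  · -- Case I : |x| small, use the second term
    have hpt : ∀ y : ℝ, τ ^ (-(1:ℝ)/2) * Real.exp (-(x - w*y)^2 / (M*τ)) *
        (1 + |y| + a) ^ (-r) ≤ τ ^ (-(1:ℝ)/2) * (1 + |y| + a) ^ (-r) := by
      intro y
      have he : Real.exp (-(x - w*y)^2 / (M*τ)) ≤ 1 := by
        apply Real.exp_le_one_iff.2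
        exact div_nonpos_of_nonpos_of_nonneg (neg_nonpos.mpr (sq_nonneg _)) hMτ.le
      calc τ ^ (-(1:ℝ)/2) * Real.exp (-(x - w*y)^2 / (M*τ)) * (1 + |y| + a) ^ (-r)
          ≤ τ ^ (-(1:ℝ)/2) * 1 * (1 + |y| + a) ^ (-r) := by
            apply mul_le_mul_of_nonneg_right _ (Real.rpow_nonneg (by positivity) _)
            exact mul_le_mul_of_nonneg_left he hτpow
        _ = τ ^ (-(1:ℝ)/2) * (1 + |y| + a) ^ (-r) := by ring
    have hint : (∫ y : ℝ, τ ^ (-(1:ℝ)/2) * Real.exp (-(x - w*y)^2 / (M*τ)) *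
        (1 + |y| + a) ^ (-r)) ≤ ∫ y : ℝ, τ ^ (-(1:ℝ)/2) * (1 + |y| + a) ^ (-r) :=
      integral_mono_of_nonneg (Filter.Eventually.of_forall hfnn) (hA.const_mul _)
        (Filter.Eventually.of_forall hpt)
    rw [integral_const_mul] at hint
    have h4 : τ ^ (-(1:ℝ)/2) * ∫ y : ℝ, (1 + |y| + a) ^ (-r) ≤
        τ ^ (-(1:ℝ)/2) * (2/(r-1) * (1+s) ^ (-(r-1)/2)) :=
      mul_le_mul_of_nonneg_left hAbound hτpow
    have h5 : τ ^ (-(1:ℝ)/2) * (1+s) ^ (-(r-1)/2) ≤ Real.exp (1/(4*M)) * T2 := by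
      have hE : (1:ℝ) ≤ Real.exp (1/(4*M)) * Real.exp (-x^2 / (4*M*(1+t))) := by
        rw [← Real.exp_add]
        apply Real.one_le_exp
        have hd : x^2 / (4*M*(1+t)) ≤ 1/(4*M) := by
          rw [div_le_div_iff₀ (mul_pos (by positivity : (0:ℝ) < 4*M) h1t) (by positivity)]
          nlinarith [mul_le_mul_of_nonneg_right hx2 (by positivity : (0:ℝ) ≤ 4*M)]
        have hneg : -x^2 / (4*M*(1+t)) = -(x^2 / (4*M*(1+t))) := by ring
        rw [hneg]; linarith
      have hP0 : 0 ≤ τ ^ (-(1:ℝ)/2) * (1+s) ^ (-(r-1)/2) :=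
        mul_nonneg hτpow (Real.rpow_nonneg (by linarith) _)
      calc τ ^ (-(1:ℝ)/2) * (1+s) ^ (-(r-1)/2)
          = (τ ^ (-(1:ℝ)/2) * (1+s) ^ (-(r-1)/2)) * 1 := by ring
        _ ≤ (τ ^ (-(1:ℝ)/2) * (1+s) ^ (-(r-1)/2)) *
            (Real.exp (1/(4*M)) * Real.exp (-x^2 / (4*M*(1+t)))) :=
            mul_le_mul_of_nonneg_left hE hP0
        _ = Real.exp (1/(4*M)) * T2 := by rw [hT2def]; ring
    have h7 : τ ^ (-(1:ℝ)/2) * (2/(r-1) * (1+s) ^ (-(r-1)/2)) ≤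
        (2/(r-1) * Real.exp (1/(4*M))) * T2 := by
      calc τ ^ (-(1:ℝ)/2) * (2/(r-1) * (1+s) ^ (-(r-1)/2))
          = 2/(r-1) * (τ ^ (-(1:ℝ)/2) * (1+s) ^ (-(r-1)/2)) := by ring
        _ ≤ 2/(r-1) * (Real.exp (1/(4*M)) * T2) := mul_le_mul_of_nonneg_left h5 hc1pos.le
        _ = (2/(r-1) * Real.exp (1/(4*M))) * T2 := by ring
    have h8 : (2/(r-1) * Real.exp (1/(4*M))) * T2 ≤ C * (T1 + T2) := by
      have hCge : 2/(r-1) * Real.exp (1/(4*M)) ≤ C := by rw [hCdef]; linarith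
      have hCpos : 0 < C := by rw [hCdef]; linarith
      nlinarith [mul_le_mul_of_nonneg_right hCge hT2n, mul_nonneg hCpos.le hT1n]
    linarith
  · -- Case II : |x| large
    have hx1 : 1 < |x| := by
      nlinarith [sq_abs x, abs_nonneg x]
    have hxpos : (0:ℝ) < |x| := by linarith
    set K : ℝ := (2*w/|x|) ^ r with hKdef
    clear_value K
    have hdnn : (0:ℝ) ≤ |x| / (2*w) := div_nonneg (abs_nonneg x) (by linarith)
    have hKn : 0 ≤ K := by
      rw [hKdef]; exact Real.rpow_nonneg (div_nonneg (by linarith) (abs_nonneg x)) _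
    have hE0 : Real.exp (-x^2 / (4*(M*τ))) ≤ Real.exp (-x^2 / (4*M*(1+t))) := by
      apply Real.exp_le_exp.2
      rw [neg_div, neg_div, neg_le_neg_iff]
      apply div_le_div_of_nonneg_left (sq_nonneg x) (by positivity)
      have hτle : τ ≤ 1 + t := by rw [hτdef]; linarith
      nlinarith
    have hpt : ∀ y : ℝ, τ ^ (-(1:ℝ)/2) * Real.exp (-(x - w*y)^2 / (M*τ)) *
        (1 + |y| + a) ^ (-r) ≤
        (τ ^ (-(1:ℝ)/2) * Real.exp (-x^2 / (4*(M*τ)))) * (1 + |y| + a) ^ (-r) +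
        (τ ^ (-(1:ℝ)/2) * K) * Real.exp (-(x - w*y)^2 / (M*τ)) := by
      intro y
      have hgn : 0 ≤ (τ ^ (-(1:ℝ)/2) * Real.exp (-x^2 / (4*(M*τ)))) * (1 + |y| + a) ^ (-r) :=
        mul_nonneg (mul_nonneg hτpow (Real.exp_nonneg _)) (Real.rpow_nonneg (by positivity) _)
      have hhn : 0 ≤ (τ ^ (-(1:ℝ)/2) * K) * Real.exp (-(x - w*y)^2 / (M*τ)) :=
        mul_nonneg (mul_nonneg hτpow hKn) (Real.exp_nonneg _)
      rcases le_or_gt (|w*y|) (|x|/2) with hy | hy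
      · -- Gaussian small
        have h1 : |x|/2 ≤ |x - w*y| := by
          have := abs_sub_abs_le_abs_sub x (w*y)
          linarith
        have h2 : x^2/4 ≤ (x - w*y)^2 := by
          have h3 := mul_self_le_mul_self (by positivity : (0:ℝ) ≤ |x|/2) h1
          have h4 := abs_mul_abs_self (x - w*y)
          have h5 := abs_mul_abs_self x
          nlinarith
        have hexp : Real.exp (-(x - w*y)^2 / (M*τ)) ≤ Real.exp (-x^2 / (4*(M*τ))) := by
          apply Real.exp_le_exp.2
          rw [div_le_div_iff₀ hMτ (by positivity)]
          nlinarith [mul_le_mul_of_nonneg_right h2 hMτ.le]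
        have hmain : τ ^ (-(1:ℝ)/2) * Real.exp (-(x - w*y)^2 / (M*τ)) * (1 + |y| + a) ^ (-r) ≤
            (τ ^ (-(1:ℝ)/2) * Real.exp (-x^2 / (4*(M*τ)))) * (1 + |y| + a) ^ (-r) := by
          apply mul_le_mul_of_nonneg_right _ (Real.rpow_nonneg (by positivity) _)
          exact mul_le_mul_of_nonneg_left hexp hτpow
        linarith
      · -- algebraic factor small
        have hwy : |x|/(2*w) < |y| := by
          rw [abs_mul, abs_of_pos hw0] at hy
          rw [div_lt_iff₀ (by positivity)]
          calc |x| = 2 * (|x|/2) := by ring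
            _ < 2 * (w * |y|) := by linarith
            _ = |y| * (2*w) := by ring
        have hP : (1 + |y| + a) ^ (-r) ≤ K := by
          have h1 : |x|/(2*w) ≤ 1 + |y| + a := by linarith
          have h2 : (1 + |y| + a) ^ (-r) ≤ (|x|/(2*w)) ^ (-r) :=
            Real.rpow_le_rpow_of_nonpos (by positivity) h1 (by linarith)
          have h3 : (|x|/(2*w)) ^ (-r) = K := by
            rw [hKdef, Real.rpow_neg hdnn, ← Real.inv_rpow hdnn, inv_div]
          rw [← h3]; exact h2
        have hmain : τ ^ (-(1:ℝ)/2) * Real.exp (-(x - w*y)^2 / (M*τ)) *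
            (1 + |y| + a) ^ (-r) ≤
            (τ ^ (-(1:ℝ)/2) * K) * Real.exp (-(x - w*y)^2 / (M*τ)) := by
          calc τ ^ (-(1:ℝ)/2) * Real.exp (-(x - w*y)^2 / (M*τ)) * (1 + |y| + a) ^ (-r)
              ≤ τ ^ (-(1:ℝ)/2) * Real.exp (-(x - w*y)^2 / (M*τ)) * K :=
                mul_le_mul_of_nonneg_left hP (mul_nonneg hτpow (Real.exp_nonneg _))
            _ = (τ ^ (-(1:ℝ)/2) * K) * Real.exp (-(x - w*y)^2 / (M*τ)) := by ring
        linarith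
    -- integrability of the two dominating pieces
    have hGauss := gauss_int (M*τ) w x hMτ hw0
    have hg_int : Integrable (fun y : ℝ =>
        (τ ^ (-(1:ℝ)/2) * Real.exp (-x^2 / (4*(M*τ)))) * (1 + |y| + a) ^ (-r)) :=
      hA.const_mul _
    have hh_int : Integrable (fun y : ℝ =>
        (τ ^ (-(1:ℝ)/2) * K) * Real.exp (-(x - w*y)^2 / (M*τ))) :=
      hGauss.1.const_mul _
    have hint : (∫ y : ℝ, τ ^ (-(1:ℝ)/2) * Real.exp (-(x - w*y)^2 / (M*τ)) *
        (1 + |y| + a) ^ (-r)) ≤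
        (∫ y : ℝ, (τ ^ (-(1:ℝ)/2) * Real.exp (-x^2 / (4*(M*τ)))) * (1 + |y| + a) ^ (-r)) +
        (∫ y : ℝ, (τ ^ (-(1:ℝ)/2) * K) * Real.exp (-(x - w*y)^2 / (M*τ))) := by
      rw [← MeasureTheory.integral_add hg_int hh_int]
      exact integral_mono_of_nonneg (Filter.Eventually.of_forall hfnn) (hg_int.add hh_int)
        (Filter.Eventually.of_forall hpt)
    -- bound the g-integral
    have hGbound : (∫ y : ℝ, (τ ^ (-(1:ℝ)/2) * Real.exp (-x^2 / (4*(M*τ)))) *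
        (1 + |y| + a) ^ (-r)) ≤ 2/(r-1) * T2 := by
      rw [integral_const_mul]
      calc (τ ^ (-(1:ℝ)/2) * Real.exp (-x^2 / (4*(M*τ)))) * ∫ y : ℝ, (1 + |y| + a) ^ (-r)
          ≤ (τ ^ (-(1:ℝ)/2) * Real.exp (-x^2 / (4*(M*τ)))) * (2/(r-1) * (1+s) ^ (-(r-1)/2)) :=
            mul_le_mul_of_nonneg_left hAbound (mul_nonneg hτpow (Real.exp_nonneg _))
        _ = 2/(r-1) * (τ ^ (-(1:ℝ)/2) * (1+s) ^ (-(r-1)/2) * Real.exp (-x^2 / (4*(M*τ)))) := by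
            ring
        _ ≤ 2/(r-1) * T2 := by
            apply mul_le_mul_of_nonneg_left _ hc1pos.le
            rw [hT2def]
            exact mul_le_mul_of_nonneg_left hE0
              (mul_nonneg hτpow (Real.rpow_nonneg (by linarith) _))
    -- bound the h-integral
    have hHbound : (∫ y : ℝ, (τ ^ (-(1:ℝ)/2) * K) * Real.exp (-(x - w*y)^2 / (M*τ))) ≤
        8 ^ r * Real.sqrt (Real.pi * M) * T1 := by
      rw [integral_const_mul, hGauss.2]
      have hsplit : Real.sqrt (Real.pi * (M*τ)) = Real.sqrt (Real.pi * M) * Real.sqrt τ := by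
        rw [show Real.pi * (M*τ) = (Real.pi * M) * τ by ring,
          Real.sqrt_mul (by positivity) τ]
      have hτtau : τ ^ (-(1:ℝ)/2) * Real.sqrt τ = 1 := by
        rw [Real.sqrt_eq_rpow, ← Real.rpow_add hτ0]
        norm_num
      have hKw : K / w ≤ 2 ^ r * |x| ^ (-r) := by
        have h1 : K = 2 ^ r * w ^ r * |x| ^ (-r) := by
          rw [hKdef, Real.div_rpow (by positivity) (abs_nonneg x),
            Real.mul_rpow (by norm_num) hw0.le, Real.rpow_neg (abs_nonneg x), div_eq_mul_inv]
        have h2 : K / w = 2 ^ r * w ^ (r-1) * |x| ^ (-r) := by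
          rw [h1, Real.rpow_sub hw0, Real.rpow_one]
          ring
        rw [h2]
        have h3 : w ^ (r-1) ≤ 1 := Real.rpow_le_one hw0.le hw1.le (by linarith)
        have h6 : (0:ℝ) ≤ |x| ^ (-r) := Real.rpow_nonneg (abs_nonneg x) _
        have h7 : (0:ℝ) ≤ (2:ℝ) ^ r := Real.rpow_nonneg (by norm_num) _
        calc 2 ^ r * w ^ (r-1) * |x| ^ (-r) ≤ 2 ^ r * 1 * |x| ^ (-r) := by
              apply mul_le_mul_of_nonneg_right _ h6
              exact mul_le_mul_of_nonneg_left h3 h7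
          _ = 2 ^ r * |x| ^ (-r) := by ring
      have hxT1 : |x| ^ (-r) ≤ 4 ^ r * T1 := by
        have hst' : Real.sqrt (t-s) ≤ |x| := by
          rw [← Real.sqrt_sq_eq_abs]
          apply Real.sqrt_le_sqrt; nlinarith
        have hss : a ≤ |x| := by
          rw [haDef, ← Real.sqrt_sq_eq_abs]
          apply Real.sqrt_le_sqrt; nlinarith
        have hR4 : 1 + |x| + Real.sqrt (t-s) + a ≤ 4 * |x| := by linarith
        have h5 : (4 * |x|) ^ (-r) ≤ T1 := by
          rw [hT1def]
          exact Real.rpow_le_rpow_of_nonpos (by positivity) hR4 (by linarith)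
        have h6 : (4 * |x|) ^ (-r) = 4 ^ (-r) * |x| ^ (-r) :=
          Real.mul_rpow (by norm_num) (abs_nonneg x)
        have h7 : (4:ℝ) ^ r * 4 ^ (-r) = 1 := by
          rw [← Real.rpow_add (by norm_num)]; norm_num
        calc |x| ^ (-r) = 4 ^ r * (4 ^ (-r) * |x| ^ (-r)) := by
              rw [← mul_assoc, h7, one_mul]
          _ = 4 ^ r * (4 * |x|) ^ (-r) := by rw [h6]
          _ ≤ 4 ^ r * T1 := mul_le_mul_of_nonneg_left h5 (by positivity)
      calc τ ^ (-(1:ℝ)/2) * K * (Real.sqrt (Real.pi * (M*τ)) / w)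
          = (K / w) * Real.sqrt (Real.pi * M) * (τ ^ (-(1:ℝ)/2) * Real.sqrt τ) := by
            rw [hsplit]; ring
        _ = (K / w) * Real.sqrt (Real.pi * M) := by rw [hτtau, mul_one]
        _ ≤ (2 ^ r * |x| ^ (-r)) * Real.sqrt (Real.pi * M) :=
            mul_le_mul_of_nonneg_right hKw (Real.sqrt_nonneg _)
        _ ≤ (2 ^ r * (4 ^ r * T1)) * Real.sqrt (Real.pi * M) := by
            apply mul_le_mul_of_nonneg_right _ (Real.sqrt_nonneg _)
            exact mul_le_mul_of_nonneg_left hxT1 (by positivity)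
        _ = (2 ^ r * 4 ^ r) * Real.sqrt (Real.pi * M) * T1 := by ring
        _ = 8 ^ r * Real.sqrt (Real.pi * M) * T1 := by
            rw [← Real.mul_rpow (by norm_num) (by norm_num)]; norm_num
    have hfinal : 2/(r-1) * T2 + 8 ^ r * Real.sqrt (Real.pi * M) * T1 ≤ C * (T1 + T2) := by
      have hCge1 : 2/(r-1) ≤ C := by rw [hCdef]; linarith
      have hCge2 : 8 ^ r * Real.sqrt (Real.pi * M) ≤ C := by rw [hCdef]; linarith
      nlinarith [mul_le_mul_of_nonneg_right hCge1 hT2n,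
        mul_le_mul_of_nonneg_right hCge2 hT1n]
    linarith
end
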